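/- There exists γ₀ > 0 such that for every γ with 0 < γ ≤ γ₀ there exists n₀ such that the following holds for all n ≥ n₀. Let H = (V, E) be an n-vertex 3-graph with δ₂(H) ≥ (1/3 − γ)n. Suppose A ∪ B is a bipartition of V such that |A|, |B| ≥ n/3 − 2γn. Then there is a copy of C₆³ in H that intersects A in an odd number of vertices. -/
import Mathlib


/-- The degree of a vertex set `S` in the hypergraph with edge set `E`:
the number of edges containing `S`. -/
def degS {n : ℕ} (E : Finset (Finset (Fin n))) (S : Finset (Fin n)) : ℕ :=
  (E.filter (fun e => S ⊆ e)).card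

/-- `s` spans a copy of `C₆³` (edges 123, 345, 561) in the 3-graph with edge set `E`. -/
def IsC6Copy {n : ℕ} (E : Finset (Finset (Fin n))) (s : Finset (Fin n)) : Prop :=
  ∃ v : Fin 6 → Fin n, Function.Injective v ∧
    s = {v 0, v 1, v 2, v 3, v 4, v 5} ∧
    {v 0, v 1, v 2} ∈ E ∧ {v 2, v 3, v 4} ∈ E ∧ {v 4, v 5, v 0} ∈ E

/-- The set `W` can be perfectly tiled by vertex-disjoint copies of `C₆³`
(seen as a `C₆³`-factor of the subhypergraph induced on `W`). -/
def HasC6Factor {n : ℕ} (E : Finset (Finset (Fin n))) (W : Finset (Fin n)) : Prop :=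
  ∃ P : Finset (Finset (Fin n)), (∀ s ∈ P, IsC6Copy E s) ∧
    (∀ s ∈ P, ∀ t ∈ P, s ≠ t → Disjoint s t) ∧ P.biUnion id = W

/-- The link of a pair: vertices z with {u,v,z} an edge. -/
def link {n : ℕ} (E : Finset (Finset (Fin n))) (u v : Fin n) : Finset (Fin n) :=
  Finset.univ.filter fun z => ({u, v, z} : Finset (Fin n)) ∈ E

/-- Whether the link of (u,v) has at least 6 vertices in A. -/
def sideA {n : ℕ} (E : Finset (Finset (Fin n))) (A : Finset (Fin n)) (u v : Fin n) : Bool :=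
  decide (6 ≤ ((link E u v) ∩ A).card)

lemma mem_link {n : ℕ} {E : Finset (Finset (Fin n))} (hE : ∀ e ∈ E, e.card = 3)
    {u v w : Fin n} (h : w ∈ link E u v) :
    ({u, v, w} : Finset (Fin n)) ∈ E ∧ w ≠ u ∧ w ≠ v := by
  simp only [link, Finset.mem_filter, Finset.mem_univ, true_and] at h
  refine ⟨h, ?_, ?_⟩
  · rintro rfl
    have hc := hE _ h
    have : ({w, v, w} : Finset (Fin n)) = {w, v} := by ext t; simp; try tauto
    rw [this] at hc
    have := Finset.card_insert_le w ({v} : Finset (Fin n))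
    simp only [Finset.card_singleton] at this; omega
  · rintro rfl
    have hc := hE _ h
    have : ({u, w, w} : Finset (Fin n)) = {u, w} := by ext t; simp; try tauto
    rw [this] at hc
    have := Finset.card_insert_le u ({w} : Finset (Fin n))
    simp only [Finset.card_singleton] at this; omega

lemma degS_le_link_card {n : ℕ} {E : Finset (Finset (Fin n))} (hE : ∀ e ∈ E, e.card = 3)
    {u v : Fin n} (huv : u ≠ v) :
    degS E {u, v} ≤ (link E u v).card := by
  apply Finset.card_le_card_of_surjOn (fun z => ({u, v, z} : Finset (Fin n)))
  intro e he
  simp only [Finset.coe_filter, Set.mem_setOf_eq, Finset.mem_coe] at he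
  obtain ⟨heE, hsub⟩ := he
  have hcard := hE _ heE
  have hne : (e \ ({u, v} : Finset (Fin n))).Nonempty := by
    rw [Finset.sdiff_nonempty]
    intro hs
    have := Finset.card_le_card hs
    rw [Finset.card_pair huv] at this; omega
  obtain ⟨z, hz⟩ := hne
  rw [Finset.mem_sdiff] at hz
  obtain ⟨hze, hzn⟩ := hz
  simp only [Finset.mem_insert, Finset.mem_singleton] at hzn
  push_neg at hzn
  have hsub2 : ({u, v, z} : Finset (Fin n)) ⊆ e := by
    intro t ht
    simp only [Finset.mem_insert, Finset.mem_singleton] at ht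
    rcases ht with rfl | rfl | rfl
    · exact hsub (by simp)
    · exact hsub (by simp)
    · exact hze
  have hc3 : ({u, v, z} : Finset (Fin n)).card = 3 := by
    rw [Finset.card_insert_of_notMem (by simp [huv, Ne.symm hzn.1]),
      Finset.card_pair (Ne.symm hzn.2)]
  have heq : ({u, v, z} : Finset (Fin n)) = e :=
    Finset.eq_of_subset_of_card_le hsub2 (by omega)
  refine ⟨z, ?_, heq⟩
  simp only [Finset.coe_filter, Set.mem_setOf_eq, link, Finset.mem_univ, true_and, Finset.mem_coe,
    Finset.mem_filter]
  rw [heq]; exact heE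

lemma pick_pendant {n : ℕ} {E : Finset (Finset (Fin n))} {A B : Finset (Fin n)}
    (hd : Disjoint A B) (hu : A ∪ B = Finset.univ) {u v : Fin n}
    (hL : 12 ≤ (link E u v).card) (F : Finset (Fin n)) (hF : F.card ≤ 5) :
    ∃ w, w ∈ link E u v ∧ w ∉ F ∧ (w ∈ A ↔ sideA E A u v = true) := by
  have key : ∀ X : Finset (Fin n), 6 ≤ X.card → ∃ w ∈ X, w ∉ F := by
    intro X hX
    have h1 := Finset.le_card_sdiff F X
    have h2 : (X \ F).Nonempty := Finset.card_pos.mp (by omega)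
    obtain ⟨w, hw⟩ := h2
    rw [Finset.mem_sdiff] at hw
    exact ⟨w, hw.1, hw.2⟩
  cases hs : sideA E A u v with
  | true =>
    have h6 : 6 ≤ ((link E u v) ∩ A).card := of_decide_eq_true hs
    obtain ⟨w, hw, hwF⟩ := key _ h6
    rw [Finset.mem_inter] at hw
    exact ⟨w, hw.1, hwF, by simp [hw.2]⟩
  | false =>
    have h5 : ((link E u v) ∩ A).card ≤ 5 := by
      have := of_decide_eq_false hs; omega
    have hsplit : (link E u v) = (link E u v) ∩ A ∪ (link E u v) ∩ B := by
      rw [← Finset.inter_union_distrib_left, hu, Finset.inter_univ]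
    have h6 : 6 ≤ ((link E u v) ∩ B).card := by
      have := Finset.card_union_le ((link E u v) ∩ A) ((link E u v) ∩ B)
      rw [← hsplit] at this; omega
    obtain ⟨w, hw, hwF⟩ := key _ h6
    rw [Finset.mem_inter] at hw
    have hwA : w ∉ A := Finset.disjoint_right.mp hd hw.2
    exact ⟨w, hw.1, hwF, by simp [hwA]⟩

lemma odd_six (ia p ib q ic r : Bool)
    (h : (ia ^^ (ib ^^ (ic ^^ (p ^^ (q ^^ r))))) = true) :
    Odd (ia.toNat + p.toNat + ib.toNat + q.toNat + ic.toNat + r.toNat) := by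
  apply Nat.odd_iff.mpr
  revert h
  revert ia p ib q ic r
  decide

lemma quad_parity (iw ix iy iz cwx cwy cwz cxy cxz cyz : Bool)
    (h : (iw ^^ (ix ^^ (iy ^^ iz))) = true) :
    ((iw ^^ (ix ^^ (iy ^^ (cwx ^^ (cxy ^^ cwy))))) = true) ∨
    ((iw ^^ (ix ^^ (iz ^^ (cwx ^^ (cxz ^^ cwz))))) = true) ∨
    ((iw ^^ (iy ^^ (iz ^^ (cwy ^^ (cyz ^^ cwz))))) = true) ∨
    ((ix ^^ (iy ^^ (iz ^^ (cxy ^^ (cyz ^^ cxz))))) = true) := by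
  revert h; revert iw ix iy iz cwx cwy cwz cxy cxz cyz; decide

lemma card_inter_six {n : ℕ} (A : Finset (Fin n)) {a b c d e f : Fin n}
    (h1 : a ≠ b) (h2 : a ≠ c) (h3 : a ≠ d) (h4 : a ≠ e) (h5 : a ≠ f)
    (h6 : b ≠ c) (h7 : b ≠ d) (h8 : b ≠ e) (h9 : b ≠ f)
    (h10 : c ≠ d) (h11 : c ≠ e) (h12 : c ≠ f)
    (h13 : d ≠ e) (h14 : d ≠ f) (h15 : e ≠ f) :
    (({a, b, c, d, e, f} : Finset (Fin n)) ∩ A).card =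
      (if a ∈ A then 1 else 0) + (if b ∈ A then 1 else 0) + (if c ∈ A then 1 else 0) +
      (if d ∈ A then 1 else 0) + (if e ∈ A then 1 else 0) + (if f ∈ A then 1 else 0) := by
  rw [← Finset.filter_mem_eq_inter, Finset.card_filter]
  rw [show ({a, b, c, d, e, f} : Finset (Fin n)) =
      insert a (insert b (insert c (insert d (insert e {f})))) from rfl]
  rw [Finset.sum_insert (by simp [h1, h2, h3, h4, h5]),
    Finset.sum_insert (by simp [h6, h7, h8, h9]),
    Finset.sum_insert (by simp [h10, h11, h12]),
    Finset.sum_insert (by simp [h13, h14]),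
    Finset.sum_insert (by simp [h15]), Finset.sum_singleton]
  ring

lemma inj6 {α : Type*} {a b c d e f : α}
    (h1 : a ≠ b) (h2 : a ≠ c) (h3 : a ≠ d) (h4 : a ≠ e) (h5 : a ≠ f)
    (h6 : b ≠ c) (h7 : b ≠ d) (h8 : b ≠ e) (h9 : b ≠ f)
    (h10 : c ≠ d) (h11 : c ≠ e) (h12 : c ≠ f)
    (h13 : d ≠ e) (h14 : d ≠ f) (h15 : e ≠ f) :
    Function.Injective ![a, b, c, d, e, f] := by
  intro i j hij
  fin_cases i <;> fin_cases j <;>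
    first
      | rfl
      | exact absurd hij (by first | exact h1 | exact h2 | exact h3 | exact h4 | exact h5 | exact h6 | exact h7 | exact h8 | exact h9 | exact h10 | exact h11 | exact h12 | exact h13 | exact h14 | exact h15 | exact (Ne.symm h1) | exact (Ne.symm h2) | exact (Ne.symm h3) | exact (Ne.symm h4) | exact (Ne.symm h5) | exact (Ne.symm h6) | exact (Ne.symm h7) | exact (Ne.symm h8) | exact (Ne.symm h9) | exact (Ne.symm h10) | exact (Ne.symm h11) | exact (Ne.symm h12) | exact (Ne.symm h13) | exact (Ne.symm h14) | exact (Ne.symm h15))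

lemma build {n : ℕ} {E : Finset (Finset (Fin n))} {A B : Finset (Fin n)}
    (hE : ∀ e ∈ E, e.card = 3) (hd : Disjoint A B) (hu : A ∪ B = Finset.univ)
    (hL : ∀ u v : Fin n, u ≠ v → 12 ≤ (link E u v).card)
    (a b c : Fin n) (hab : a ≠ b) (hac : a ≠ c) (hbc : b ≠ c)
    (hx : ((decide (a ∈ A)) ^^ ((decide (b ∈ A)) ^^ ((decide (c ∈ A)) ^^
      (sideA E A a b ^^ (sideA E A b c ^^ sideA E A a c))))) = true) :
    ∃ s : Finset (Fin n), IsC6Copy E s ∧ Odd ((s ∩ A).card) := by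
  have hc3 : ({a, b, c} : Finset (Fin n)).card ≤ 5 := by
    have h1 := Finset.card_insert_le a ({b, c} : Finset (Fin n))
    have h2 := Finset.card_insert_le b ({c} : Finset (Fin n))
    simp only [Finset.card_singleton] at h2; omega
  obtain ⟨p1, hp1l, hp1F, hp1A⟩ := pick_pendant hd hu (hL a b hab) {a, b, c} hc3
  obtain ⟨e1, hp1a, hp1b⟩ := mem_link hE hp1l
  simp only [Finset.mem_insert, Finset.mem_singleton] at hp1F
  push_neg at hp1F
  have hc4 : ({a, b, c, p1} : Finset (Fin n)).card ≤ 5 := by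
    have h1 := Finset.card_insert_le a ({b, c, p1} : Finset (Fin n))
    have h2 := Finset.card_insert_le b ({c, p1} : Finset (Fin n))
    have h3 := Finset.card_insert_le c ({p1} : Finset (Fin n))
    simp only [Finset.card_singleton] at h3; omega
  obtain ⟨p2, hp2l, hp2F, hp2A⟩ := pick_pendant hd hu (hL b c hbc) {a, b, c, p1} hc4
  obtain ⟨e2, hp2b, hp2c⟩ := mem_link hE hp2l
  simp only [Finset.mem_insert, Finset.mem_singleton] at hp2F
  push_neg at hp2F
  have hc5 : ({a, b, c, p1, p2} : Finset (Fin n)).card ≤ 5 := by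
    have h1 := Finset.card_insert_le a ({b, c, p1, p2} : Finset (Fin n))
    have h2 := Finset.card_insert_le b ({c, p1, p2} : Finset (Fin n))
    have h3 := Finset.card_insert_le c ({p1, p2} : Finset (Fin n))
    have h4 := Finset.card_insert_le p1 ({p2} : Finset (Fin n))
    simp only [Finset.card_singleton] at h4; omega
  obtain ⟨p3, hp3l, hp3F, hp3A⟩ := pick_pendant hd hu (hL a c hac) {a, b, c, p1, p2} hc5
  obtain ⟨e3, hp3a, hp3c⟩ := mem_link hE hp3l
  simp only [Finset.mem_insert, Finset.mem_singleton] at hp3F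
  push_neg at hp3F
  -- distinctness
  have d1 : a ≠ p1 := Ne.symm hp1a
  have d2 : a ≠ p2 := Ne.symm hp2F.1
  have d3 : a ≠ p3 := Ne.symm hp3a
  have d4 : b ≠ p1 := Ne.symm hp1b
  have d5 : b ≠ p2 := Ne.symm hp2b
  have d6 : b ≠ p3 := Ne.symm hp3F.2.1
  have d7 : c ≠ p1 := Ne.symm hp1F.2.2
  have d8 : c ≠ p2 := Ne.symm hp2c
  have d9 : c ≠ p3 := Ne.symm hp3c
  have d10 : p1 ≠ p2 := Ne.symm hp2F.2.2.2
  have d11 : p1 ≠ p3 := Ne.symm hp3F.2.2.2.1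
  have d12 : p2 ≠ p3 := Ne.symm hp3F.2.2.2.2
  have hv0 : (![a, p1, b, p2, c, p3] : Fin 6 → Fin n) 0 = a := rfl
  have hv1 : (![a, p1, b, p2, c, p3] : Fin 6 → Fin n) 1 = p1 := rfl
  have hv2 : (![a, p1, b, p2, c, p3] : Fin 6 → Fin n) 2 = b := rfl
  have hv3 : (![a, p1, b, p2, c, p3] : Fin 6 → Fin n) 3 = p2 := rfl
  have hv4 : (![a, p1, b, p2, c, p3] : Fin 6 → Fin n) 4 = c := rfl
  have hv5 : (![a, p1, b, p2, c, p3] : Fin 6 → Fin n) 5 = p3 := rfl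
  refine ⟨{a, p1, b, p2, c, p3}, ⟨![a, p1, b, p2, c, p3],
    inj6 d1 hab d2 hac d3 (Ne.symm d4) d10 (Ne.symm d7) d11 d5 hbc d6 (Ne.symm d8) d12 d9,
    ?_, ?_, ?_, ?_⟩, ?_⟩
  · rw [hv0, hv1, hv2, hv3, hv4, hv5]
  · rw [hv0, hv1, hv2]
    have : ({a, p1, b} : Finset (Fin n)) = {a, b, p1} := by rw [Finset.pair_comm p1 b]
    rw [this]; exact e1
  · rw [hv2, hv3, hv4]
    have : ({b, p2, c} : Finset (Fin n)) = {b, c, p2} := by rw [Finset.pair_comm p2 c]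
    rw [this]; exact e2
  · rw [hv4, hv5, hv0]
    have : ({c, p3, a} : Finset (Fin n)) = {a, c, p3} := by
      rw [Finset.pair_comm p3 a, Finset.insert_comm c a]
    rw [this]; exact e3
  · rw [card_inter_six A d1 hab d2 hac d3 (Ne.symm d4) d10 (Ne.symm d7) d11
      d5 hbc d6 (Ne.symm d8) d12 d9]
    have ea : (if a ∈ A then 1 else 0) = (decide (a ∈ A)).toNat := by
      by_cases h : a ∈ A <;> simp [h]
    have eb : (if b ∈ A then 1 else 0) = (decide (b ∈ A)).toNat := by
      by_cases h : b ∈ A <;> simp [h]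
    have ec : (if c ∈ A then 1 else 0) = (decide (c ∈ A)).toNat := by
      by_cases h : c ∈ A <;> simp [h]
    have ep1 : (if p1 ∈ A then 1 else 0) = (sideA E A a b).toNat := by
      by_cases h : p1 ∈ A
      · simp [h, hp1A.mp h]
      · have : sideA E A a b = false := by
          cases hs : sideA E A a b
          · rfl
          · exact absurd (hp1A.mpr hs) h
        simp [h, this]
    have ep2 : (if p2 ∈ A then 1 else 0) = (sideA E A b c).toNat := by
      by_cases h : p2 ∈ A
      · simp [h, hp2A.mp h]
      · have : sideA E A b c = false := by
          cases hs : sideA E A b c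
          · rfl
          · exact absurd (hp2A.mpr hs) h
        simp [h, this]
    have ep3 : (if p3 ∈ A then 1 else 0) = (sideA E A a c).toNat := by
      by_cases h : p3 ∈ A
      · simp [h, hp3A.mp h]
      · have : sideA E A a c = false := by
          cases hs : sideA E A a c
          · rfl
          · exact absurd (hp3A.mpr hs) h
        simp [h, this]
    rw [ea, eb, ec, ep1, ep2, ep3]
    exact odd_six _ _ _ _ _ _ hx

/-- Odd copy lemma: there is `γ₀ > 0` such that for `0 < γ ≤ γ₀` and
sufficiently large `n`, if `H` is an `n`-vertex 3-graph with `δ₂(H) ≥ (1/3 - γ)n` and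
`A ∪ B` is a bipartition of the vertex set with `|A|, |B| ≥ n/3 - 2γn`, then `H` contains
a copy of `C₆³` intersecting `A` in an odd number of vertices. -/
theorem odd_copy_lemma :
    ∃ γ₀ : ℝ, 0 < γ₀ ∧ ∀ γ : ℝ, 0 < γ → γ ≤ γ₀ →
      ∃ n₀ : ℕ, ∀ n : ℕ, n₀ ≤ n →
        ∀ E : Finset (Finset (Fin n)), (∀ e ∈ E, e.card = 3) →
        (∀ S : Finset (Fin n), S.card = 2 → ((1 : ℝ) / 3 - γ) * n ≤ (degS E S : ℝ)) →
        ∀ A B : Finset (Fin n), Disjoint A B → A ∪ B = Finset.univ →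
          (n : ℝ) / 3 - 2 * γ * n ≤ (A.card : ℝ) →
          (n : ℝ) / 3 - 2 * γ * n ≤ (B.card : ℝ) →
          ∃ s : Finset (Fin n), IsC6Copy E s ∧ Odd ((s ∩ A).card) := by
  refine ⟨1/12, by norm_num, fun γ hγ0 hγ => ⟨48, fun n hn E hE hdeg A B hd hu hA hB => ?_⟩⟩
  have hn48 : (48 : ℝ) ≤ (n : ℝ) := by exact_mod_cast hn
  have hγn : γ * n ≤ (1 / 12) * n :=
    mul_le_mul_of_nonneg_right hγ (by positivity)
  have hL : ∀ u v : Fin n, u ≠ v → 12 ≤ (link E u v).card := by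
    intro u v huv
    have h2 : (({u, v} : Finset (Fin n))).card = 2 := Finset.card_pair huv
    have hd2 := hdeg {u, v} h2
    have h12r : (12 : ℝ) ≤ (degS E {u, v} : ℝ) := by nlinarith
    have : (12 : ℕ) ≤ degS E {u, v} := by exact_mod_cast h12r
    exact this.trans (degS_le_link_card hE huv)
  have hA3 : 3 ≤ A.card := by
    have : (3 : ℝ) ≤ (A.card : ℝ) := by nlinarith
    exact_mod_cast this
  have hB3 : 3 ≤ B.card := by
    have : (3 : ℝ) ≤ (B.card : ℝ) := by nlinarith
    exact_mod_cast this
  obtain ⟨a0, ha0⟩ := Finset.card_pos.mp (show 0 < A.card by omega)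
  obtain ⟨T, hTB, hT3⟩ := Finset.exists_subset_card_eq hB3
  obtain ⟨b1, b2, b3, hb12, hb13, hb23, rfl⟩ := Finset.card_eq_three.mp hT3
  have hb1 : b1 ∈ B := hTB (by simp)
  have hb2 : b2 ∈ B := hTB (by simp)
  have hb3 : b3 ∈ B := hTB (by simp)
  have hb1A : b1 ∉ A := Finset.disjoint_right.mp hd hb1
  have hb2A : b2 ∉ A := Finset.disjoint_right.mp hd hb2
  have hb3A : b3 ∉ A := Finset.disjoint_right.mp hd hb3
  have ha01 : a0 ≠ b1 := by rintro rfl; exact hb1A ha0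
  have ha02 : a0 ≠ b2 := by rintro rfl; exact hb2A ha0
  have ha03 : a0 ≠ b3 := by rintro rfl; exact hb3A ha0
  have e0 : decide (a0 ∈ A) = true := decide_eq_true ha0
  have f1 : decide (b1 ∈ A) = false := decide_eq_false hb1A
  have f2 : decide (b2 ∈ A) = false := decide_eq_false hb2A
  have f3 : decide (b3 ∈ A) = false := decide_eq_false hb3A
  have hq := quad_parity (decide (a0 ∈ A)) (decide (b1 ∈ A)) (decide (b2 ∈ A))
    (decide (b3 ∈ A)) (sideA E A a0 b1) (sideA E A a0 b2) (sideA E A a0 b3)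
    (sideA E A b1 b2) (sideA E A b1 b3) (sideA E A b2 b3)
    (by rw [e0, f1, f2, f3]; rfl)
  rcases hq with h | h | h | h
  · exact build hE hd hu hL a0 b1 b2 ha01 ha02 hb12 h
  · exact build hE hd hu hL a0 b1 b3 ha01 ha03 hb13 h
  · exact build hE hd hu hL a0 b2 b3 ha02 ha03 hb23 h
  · exact build hE hd hu hL b1 b2 b3 hb12 hb13 hb23 h
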